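/- arXiv:math/0703629 — 6 statements merged into one kernel-verified Lean document; each statement's English description precedes it below -/
import Mathlib

section
/- In any PN space (V, ν, τ, τ*), if |α| ≤ |β| for scalars α, β ∈ ℝ, then ν_{βp} ≤ ν_{αp} for every p ∈ V. -/
open Filter Topology Set

/-- A distribution function in `Δ⁺`: nondecreasing, left-continuous,
vanishing on `(-∞,0]` and bounded by `1`. -/
structure DistFun where
  toFun : ℝ → ℝ
  mono' : Monotone toFun
  leftCont' : ∀ x, Filter.Tendsto toFun (nhdsWithin x (Set.Iio x)) (nhds (toFun x))
  zero' : ∀ x ≤ (0 : ℝ), toFun x = 0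
  le_one' : ∀ x, toFun x ≤ 1

instance : CoeFun DistFun (fun _ => ℝ → ℝ) := ⟨DistFun.toFun⟩

/-- Pointwise order on `Δ⁺`. -/
instance : LE DistFun := ⟨fun F G => ∀ x, F.toFun x ≤ G.toFun x⟩

/-- The unit step distribution function `ε_a` for `a ≥ 0`. -/
noncomputable def unitStep (a : ℝ) (_ha : 0 ≤ a) : DistFun where
  toFun x := if x ≤ a then 0 else 1
  mono' := by
    intro x y hxy
    by_cases hx : x ≤ a <;> by_cases hy : y ≤ a <;> simp [hx, hy] <;> linarith
  leftCont' := by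
    intro x
    by_cases hx : x ≤ a
    · have h : (fun y => if y ≤ a then (0:ℝ) else 1) =ᶠ[nhdsWithin x (Set.Iio x)]
          fun _ => (0:ℝ) := by
        filter_upwards [self_mem_nhdsWithin] with y hy
        exact if_pos ((le_of_lt hy).trans hx)
      simpa [if_pos hx] using (tendsto_const_nhds (α := ℝ)).congr' h.symm
    · have hax : a < x := not_le.mp hx
      have h : (fun y => if y ≤ a then (0:ℝ) else 1) =ᶠ[nhdsWithin x (Set.Iio x)]
          fun _ => (1:ℝ) := by
        filter_upwards [(eventually_gt_nhds hax).filter_mono nhdsWithin_le_nhds] with y hy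
        exact if_neg (not_le.mpr hy)
      simpa [if_neg hx] using (tendsto_const_nhds (α := ℝ)).congr' h.symm
  zero' := fun x hx => if_pos (hx.trans _ha)
  le_one' := by intro x; by_cases h : x ≤ a <;> simp [h]

/-- The maximal element `ε₀` of `Δ⁺`. -/
noncomputable def eps0 : DistFun := unitStep 0 le_rfl

/-- The one-sided Lévy condition `(F,G;h)`. -/
def levyCond (F G : DistFun) (h : ℝ) : Prop :=
  ∀ x : ℝ, -(1/h) < x → x < 1/h →
    F.toFun (x - h) - h ≤ G.toFun x ∧ G.toFun x ≤ F.toFun (x + h) + h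

/-- The Sibley (modified Lévy) metric on `Δ⁺`. -/
noncomputable def sibley (F G : DistFun) : ℝ :=
  sInf {h : ℝ | 0 < h ∧ h ≤ 1 ∧ levyCond F G h ∧ levyCond G F h}

/-- Triangle function: associative, commutative, nondecreasing binary
operation on `Δ⁺` with identity `ε₀`. -/
structure IsTriangleFun (τ : DistFun → DistFun → DistFun) : Prop where
  comm : ∀ F G, τ F G = τ G F
  assoc : ∀ F G H, τ (τ F G) H = τ F (τ G H)
  mono : ∀ F G H, F ≤ G → τ F H ≤ τ G H
  ident : ∀ F, τ F eps0 = F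

/-- Continuity of a triangle function w.r.t. the Sibley metric (sequential form). -/
def TriCont (τ : DistFun → DistFun → DistFun) : Prop :=
  ∀ (F G : ℕ → DistFun) (F₀ G₀ : DistFun),
    Filter.Tendsto (fun n => sibley (F n) F₀) Filter.atTop (nhds 0) →
    Filter.Tendsto (fun n => sibley (G n) G₀) Filter.atTop (nhds 0) →
    Filter.Tendsto (fun n => sibley (τ (F n) (G n)) (τ F₀ G₀)) Filter.atTop (nhds 0)

/-- Sup-continuity of a triangle function: `τ (sup_i F_i) G = sup_i τ (F_i) G`
(pointwise). -/
def SupCont (τ : DistFun → DistFun → DistFun) : Prop :=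
  ∀ {ι : Type} [Nonempty ι] (F : ι → DistFun) (S G : DistFun),
    (∀ x, S.toFun x = ⨆ i, (F i).toFun x) →
    ∀ x, (τ S G).toFun x = ⨆ i, (τ (F i) G).toFun x

/-- Domination `τ₁ ≫ τ₂` of triangle functions. -/
def Dominates (τ₁ τ₂ : DistFun → DistFun → DistFun) : Prop :=
  ∀ F₁ F₂ G₁ G₂, τ₂ (τ₁ F₁ F₂) (τ₁ G₁ G₂) ≤ τ₁ (τ₂ F₁ G₁) (τ₂ F₂ G₂)

/-- A probabilistic pseudo-normed space `(V, ν, τ, τ*)`. -/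
structure IsPPNSpace {V : Type*} [AddCommGroup V] [Module ℝ V]
    (ν : V → DistFun) (τ τs : DistFun → DistFun → DistFun) : Prop where
  tri : IsTriangleFun τ
  tri_s : IsTriangleFun τs
  cont : TriCont τ
  cont_s : TriCont τs
  tau_le : ∀ F G, τ F G ≤ τs F G
  N1' : ν 0 = eps0
  N2 : ∀ p, ν (-p) = ν p
  N3 : ∀ p q, τ (ν p) (ν q) ≤ ν (p + q)
  N4 : ∀ (p : V) (α : ℝ), 0 ≤ α → α ≤ 1 →
    ν p ≤ τs (ν (α • p)) (ν ((1 - α) • p))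

/-- A probabilistic normed space `(V, ν, τ, τ*)`. -/
structure IsPNSpace {V : Type*} [AddCommGroup V] [Module ℝ V]
    (ν : V → DistFun) (τ τs : DistFun → DistFun → DistFun)
    extends IsPPNSpace ν τ τs : Prop where
  N1 : ∀ p, ν p = eps0 ↔ p = 0

/-- The strong topology of a PN space, generated by the strong neighbourhoods
`N_p(t) = {q : ν_{q-p}(t) > 1 - t}`. -/
def strongTop {V : Type*} [AddCommGroup V] (ν : V → DistFun) : TopologicalSpace V :=
  TopologicalSpace.generateFrom
    {S | ∃ (p : V) (t : ℝ), 0 < t ∧ S = {q | 1 - t < (ν (q - p)).toFun t}}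

/-- A set is closed in the strong topology. -/
def StrongClosed {V : Type*} [AddCommGroup V] (ν : V → DistFun) (S : Set V) : Prop :=
  @IsClosed V (strongTop ν) S

/-- A strong Cauchy sequence. -/
def StrongCauchy {V : Type*} [AddCommGroup V] (ν : V → DistFun) (p : ℕ → V) : Prop :=
  ∀ t : ℝ, 0 < t → ∃ N : ℕ, ∀ m n, N ≤ m → N ≤ n → 1 - t < (ν (p n - p m)).toFun t

/-- Strong convergence of a sequence to a point. -/
def StrongConv {V : Type*} [AddCommGroup V] (ν : V → DistFun) (p : ℕ → V) (x : V) : Prop :=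
  ∀ t : ℝ, 0 < t → ∃ N : ℕ, ∀ n, N ≤ n → 1 - t < (ν (p n - x)).toFun t

/-- Strong completeness. -/
def StrongComplete {V : Type*} [AddCommGroup V] (ν : V → DistFun) : Prop :=
  ∀ p : ℕ → V, StrongCauchy ν p → ∃ x, StrongConv ν p x

lemma DistFun.le_eps0 (F : DistFun) : F ≤ eps0 := by
  intro x
  by_cases hx : x ≤ 0
  · simp [eps0, unitStep, hx, F.zero' x hx]
  · simp [eps0, unitStep, hx, F.le_one' x]

lemma DistFun.le_trans' {F G H : DistFun} (h1 : F ≤ G) (h2 : G ≤ H) : F ≤ H :=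
  fun x => le_trans (h1 x) (h2 x)

lemma pn_shrink {V : Type*} [AddCommGroup V] [Module ℝ V]
    (ν : V → DistFun) (τ τs : DistFun → DistFun → DistFun)
    (h : IsPNSpace ν τ τs) (lam : ℝ) (h0 : 0 ≤ lam) (h1 : lam ≤ 1) (q : V) :
    ν q ≤ ν (lam • q) := by
  have step1 : ν q ≤ τs (ν (lam • q)) (ν ((1 - lam) • q)) := h.N4 q lam h0 h1
  have step2 : τs (ν (lam • q)) (ν ((1 - lam) • q)) ≤ ν (lam • q) := by
    have := h.tri_s.mono (ν ((1 - lam) • q)) eps0 (ν (lam • q))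
      (DistFun.le_eps0 _)
    rw [h.tri_s.comm (ν (lam • q)) (ν ((1 - lam) • q))]
    calc τs (ν ((1 - lam) • q)) (ν (lam • q))
        ≤ τs eps0 (ν (lam • q)) := this
      _ = ν (lam • q) := by rw [h.tri_s.comm, h.tri_s.ident]
  exact DistFun.le_trans' step1 step2

lemma pn_abs_eq {V : Type*} [AddCommGroup V] [Module ℝ V]
    (ν : V → DistFun) (τ τs : DistFun → DistFun → DistFun)
    (h : IsPNSpace ν τ τs) (a b : ℝ) (hab : |a| = |b|) (p : V) :
    ν (a • p) = ν (b • p) := by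
  rcases abs_eq_abs.mp hab with rfl | rfl
  · rfl
  · rw [neg_smul, h.N2]

theorem pn_norm_scalar_antitone {V : Type*} [AddCommGroup V] [Module ℝ V]
    (ν : V → DistFun) (τ τs : DistFun → DistFun → DistFun)
    (h : IsPNSpace ν τ τs) (α β : ℝ) (hab : |α| ≤ |β|) (p : V) :
    ν (β • p) ≤ ν (α • p) := by
  by_cases hβ : β = 0
  · have hα : α = 0 := by
      have := hab
      rw [hβ, abs_zero] at this
      exact abs_eq_zero.mp (le_antisymm this (abs_nonneg α))
    rw [hα, hβ]
    exact fun x => le_rfl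
  · set lam := |α| / |β| with hlam
    have hb : 0 < |β| := abs_pos.mpr hβ
    have h0 : 0 ≤ lam := div_nonneg (abs_nonneg α) hb.le
    have h1 : lam ≤ 1 := (div_le_one hb).mpr hab
    have key : ν (β • p) ≤ ν (lam • β • p) := pn_shrink ν τ τs h lam h0 h1 (β • p)
    have habs : |lam * β| = |α| := by
      rw [abs_mul, abs_of_nonneg h0, hlam, div_mul_eq_mul_div,
        mul_div_assoc, div_self hb.ne', mul_one]
    have : ν (lam • β • p) = ν (α • p) := by
      rw [smul_smul]
      exact pn_abs_eq ν τ τs h (lam * β) α habs p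
    rwa [this] at key
end

section
/- Let (V, ν, τ, τ*) be a PN space with τ, τ* sup-continuous, W a linear subspace of V, and define ν̄ on the quotient V/W by ν̄_{p+W}(x) := sup_{q∈W} ν_{p+q}(x). Then (V/W, ν̄, τ, τ*) is a probabilistic pseudo-normed space, i.e., ν̄ satisfies ν̄_{0+W} = ε₀, ν̄_{−(p+W)} = ν̄_{p+W}, ν̄_{(p+W)+(q+W)} ≥ τ(ν̄_{p+W}, ν̄_{q+W}), and ν̄_{p+W} ≤ τ*(ν̄_{α(p+W)}, ν̄_{(1−α)(p+W)}) for α ∈ [0,1]. -/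
open Filter Topology Set

private lemma DistFun.ext' {F G : DistFun} (h : ∀ x, F.toFun x = G.toFun x) : F = G := by
  cases F; cases G
  simp only [DistFun.mk.injEq]
  exact funext h

theorem quotient_is_PPN {V : Type*} [AddCommGroup V] [Module ℝ V]
    (ν : V → DistFun) (τ τs : DistFun → DistFun → DistFun)
    (h : IsPNSpace ν τ τs) (hτ : SupCont τ) (hτs : SupCont τs)
    (W : Submodule ℝ V)
    (ν' : V ⧸ W → DistFun)
    (hν' : ∀ (p : V) (x : ℝ),
      (ν' (W.mkQ p)).toFun x = ⨆ q : W, (ν (p + (q : V))).toFun x) :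
    IsPPNSpace ν' τ τs := by
  classical
  have key : ∀ (p : V) (x : ℝ),
      BddAbove (Set.range fun q : W => (ν (p + (q : V))).toFun x) := by
    intro p x
    refine ⟨1, ?_⟩
    rintro r ⟨q, rfl⟩
    exact (ν _).le_one' x
  have keyI : ∀ (p : V) (x : ℝ),
      BddAbove (Set.range fun i : {f : DistFun // ∃ q : W, f = ν (p + (q : V))} =>
        i.1.toFun x) := by
    intro p x
    refine ⟨1, ?_⟩
    rintro r ⟨i, rfl⟩
    exact i.1.le_one' x
  haveI : ∀ p : V, Nonempty {f : DistFun // ∃ q : W, f = ν (p + (q : V))} :=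
    fun p => ⟨⟨ν (p + ((0 : W) : V)), 0, rfl⟩⟩
  have hsup : ∀ (p : V) (x : ℝ), (ν' (W.mkQ p)).toFun x =
      ⨆ i : {f : DistFun // ∃ q : W, f = ν (p + (q : V))}, i.1.toFun x := by
    intro p x
    rw [hν' p x]
    apply le_antisymm
    · refine ciSup_le fun q => ?_
      exact le_ciSup (keyI p x) ⟨ν (p + (q : V)), q, rfl⟩
    · refine ciSup_le fun i => ?_
      obtain ⟨q, hq⟩ := i.2
      rw [hq]
      exact le_ciSup (key p x) q
  constructor
  · exact h.tri
  · exact h.tri_s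
  · exact h.cont
  · exact h.cont_s
  · exact h.tau_le
  · -- N1'
    rw [show (0 : V ⧸ W) = W.mkQ 0 from (map_zero _).symm]
    apply DistFun.ext'
    intro x
    rw [hν' 0 x]
    apply le_antisymm
    · refine ciSup_le fun q => ?_
      by_cases hx : x ≤ 0
      · rw [(ν _).zero' x hx, eps0, unitStep]
        simp [hx]
      · have := (ν ((0:V) + (q:V))).le_one' x
        rw [eps0, unitStep]
        simpa [hx] using this
    · have h0 : eps0.toFun x = (ν ((0:V) + ((0 : W) : V))).toFun x := by
        rw [show (0:V) + ((0:W):V) = 0 by simp, h.N1']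
      rw [h0]
      exact le_ciSup (key 0 x) 0
  · -- N2
    intro P
    obtain ⟨p, rfl⟩ := W.mkQ_surjective P
    rw [show -W.mkQ p = W.mkQ (-p) from (map_neg _ _).symm]
    apply DistFun.ext'
    intro x
    rw [hν' (-p) x, hν' p x]
    apply le_antisymm
    · refine ciSup_le fun q => ?_
      have e : -p + (q : V) = -(p + ((-q : W) : V)) := by
        push_cast
        abel
      rw [e, h.N2]
      exact le_ciSup (key p x) (-q)
    · refine ciSup_le fun q => ?_
      have e : p + (q : V) = -(-p + ((-q : W) : V)) := by
        push_cast
        abel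
      rw [e, h.N2]
      exact le_ciSup (key (-p) x) (-q)
  · -- N3
    intro P Q
    obtain ⟨p, rfl⟩ := W.mkQ_surjective P
    obtain ⟨q0, rfl⟩ := W.mkQ_surjective Q
    intro x
    rw [show W.mkQ p + W.mkQ q0 = W.mkQ (p + q0) from (map_add _ _ _).symm]
    have e1 := hτ (fun i : {f : DistFun // ∃ q : W, f = ν (p + (q : V))} => i.1)
      (ν' (W.mkQ p)) (ν' (W.mkQ q0)) (fun y => hsup p y) x
    rw [e1, hν' (p + q0) x]
    refine ciSup_le fun i => ?_
    rw [h.tri.comm i.1 (ν' (W.mkQ q0))]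
    have e2 := hτ (fun j : {f : DistFun // ∃ q : W, f = ν (q0 + (q : V))} => j.1)
      (ν' (W.mkQ q0)) i.1 (fun y => hsup q0 y) x
    rw [e2]
    refine ciSup_le fun j => ?_
    obtain ⟨a, ha⟩ := i.2
    obtain ⟨b, hb⟩ := j.2
    rw [ha, hb]
    refine le_trans (h.N3 (q0 + (b : V)) (p + (a : V)) x) ?_
    have e3 : q0 + (b : V) + (p + (a : V)) = p + q0 + ((a + b : W) : V) := by
      push_cast
      abel
    rw [e3]
    exact le_ciSup (key (p + q0) x) (a + b)
  · -- N4
    intro P α hα0 hα1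
    obtain ⟨p, rfl⟩ := W.mkQ_surjective P
    intro x
    rw [show α • W.mkQ p = W.mkQ (α • p) from (map_smul _ _ _).symm,
        show (1 - α) • W.mkQ p = W.mkQ ((1 - α) • p) from (map_smul _ _ _).symm,
        hν' p x]
    refine ciSup_le fun q => ?_
    refine le_trans (h.N4 (p + (q : V)) α hα0 hα1 x) ?_
    have m1 : ν (α • (p + (q : V))) ≤ ν' (W.mkQ (α • p)) := by
      intro y
      rw [hν' (α • p) y]
      have e : α • (p + (q : V)) = α • p + ((α • q : W) : V) := by
        push_cast
        rw [smul_add]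
      rw [e]
      exact le_ciSup (key (α • p) y) (α • q)
    have m2 : ν ((1 - α) • (p + (q : V))) ≤ ν' (W.mkQ ((1 - α) • p)) := by
      intro y
      rw [hν' ((1 - α) • p) y]
      have e : (1 - α) • (p + (q : V)) = (1 - α) • p + (((1 - α) • q : W) : V) := by
        push_cast
        rw [smul_add]
      rw [e]
      exact le_ciSup (key ((1 - α) • p) y) ((1 - α) • q)
    calc (τs (ν (α • (p + (q : V)))) (ν ((1 - α) • (p + (q : V))))).toFun x
        ≤ (τs (ν' (W.mkQ (α • p))) (ν ((1 - α) • (p + (q : V))))).toFun x :=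
          h.tri_s.mono _ _ _ m1 x
      _ = (τs (ν ((1 - α) • (p + (q : V)))) (ν' (W.mkQ (α • p)))).toFun x := by
          rw [h.tri_s.comm]
      _ ≤ (τs (ν' (W.mkQ ((1 - α) • p))) (ν' (W.mkQ (α • p)))).toFun x :=
          h.tri_s.mono _ _ _ m2 x
      _ = (τs (ν' (W.mkQ (α • p))) (ν' (W.mkQ ((1 - α) • p)))).toFun x := by
          rw [h.tri_s.comm]
end

section
/- Let (V, ν, τ, τ*) be a PN space with τ, τ* sup-continuous, W a closed subspace, and π : V → V/W the canonical projection. Then for every p ∈ V and t > 0, π(N_p(t)) = N'_{p+W}(t), where N_p(t) = {q ∈ V : ν_{q−p}(t) > 1−t} and N'_{p+W}(t) = {q+W : ν̄_{(q−p)+W}(t) > 1−t}; in particular π is an open map for the strong topologies. -/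
open Filter Topology Set

/-! ### Auxiliary lemmas -/

lemma DistFun.nonneg (F : DistFun) (x : ℝ) : 0 ≤ F.toFun x := by
  rcases le_or_gt x 0 with hx | hx
  · rw [F.zero' x hx]
  · have := F.mono' (le_of_lt hx)
    rw [F.zero' 0 le_rfl] at this
    exact this

lemma levyCond_one (F G : DistFun) : levyCond F G 1 := by
  intro x _ _
  constructor
  · have h1 := F.le_one' (x - 1)
    have h2 := G.nonneg x
    linarith
  · have h1 := G.le_one' x
    have h2 := F.nonneg (x + 1)
    linarith

lemma one_mem_sibleySet (F G : DistFun) :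
    (1 : ℝ) ∈ {h : ℝ | 0 < h ∧ h ≤ 1 ∧ levyCond F G h ∧ levyCond G F h} :=
  ⟨one_pos, le_rfl, levyCond_one F G, levyCond_one G F⟩

lemma sibleySet_bddBelow (F G : DistFun) :
    BddBelow {h : ℝ | 0 < h ∧ h ≤ 1 ∧ levyCond F G h ∧ levyCond G F h} :=
  ⟨0, fun _ hy => hy.1.le⟩

lemma sibley_nonneg (F G : DistFun) : 0 ≤ sibley F G :=
  le_csInf ⟨1, one_mem_sibleySet F G⟩ (fun _ hy => hy.1.le)

lemma sibley_self (F : DistFun) : sibley F F = 0 := by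
  have hle : ∀ ε : ℝ, 0 < ε → sibley F F ≤ ε := by
    intro ε hε
    have hmem : min ε 1 ∈ {h : ℝ | 0 < h ∧ h ≤ 1 ∧ levyCond F F h ∧ levyCond F F h} := by
      refine ⟨lt_min hε one_pos, min_le_right _ _, ?_, ?_⟩ <;>
      · intro x _ _
        have hpos : 0 < min ε 1 := lt_min hε one_pos
        constructor
        · have := F.mono' (by linarith : x - min ε 1 ≤ x)
          linarith
        · have := F.mono' (by linarith : x ≤ x + min ε 1)
          linarith
    exact (csInf_le (sibleySet_bddBelow F F) hmem).trans (min_le_left _ _)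
  have h0 : sibley F F ≤ 0 := le_of_forall_pos_le_add (by
    intro ε hε; simpa using hle ε hε)
  exact le_antisymm h0 (sibley_nonneg F F)

lemma sibley_le_eps0 {F : DistFun} {s : ℝ} (hs : 0 < s) (hs1 : s ≤ 1)
    (hF : 1 - s < F.toFun s) : sibley F eps0 ≤ s := by
  have heps : ∀ x : ℝ, eps0.toFun x = if x ≤ 0 then 0 else 1 := fun x => rfl
  refine csInf_le (sibleySet_bddBelow F eps0) ⟨hs, hs1, ?_, ?_⟩
  · intro x _ _
    rw [heps]
    constructor
    · by_cases hx : x ≤ 0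
      · rw [if_pos hx, F.zero' (x - s) (by linarith)]; linarith
      · rw [if_neg hx]
        have := F.le_one' (x - s)
        linarith
    · by_cases hx : x ≤ 0
      · rw [if_pos hx]
        have := F.nonneg (x + s)
        linarith
      · rw [if_neg hx]
        have := F.mono' (by linarith : s ≤ x + s)
        linarith
  · intro x _ _
    rw [heps (x - s), heps (x + s)]
    constructor
    · by_cases hx : x - s ≤ 0
      · rw [if_pos hx]
        have := F.nonneg x
        linarith
      · rw [if_neg hx]
        have := F.mono' (by linarith : s ≤ x)
        linarith
    · by_cases hx : x + s ≤ 0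
      · rw [if_pos hx, F.zero' x (by linarith)]; linarith
      · rw [if_neg hx]
        have := F.le_one' x
        linarith

lemma sibley_lt_imp {H G : DistFun} {h t : ℝ} (ht : 0 < t) (hht : h < 1 / t)
    (hs : sibley H G < h) : G.toFun (t - h) - h ≤ H.toFun t := by
  obtain ⟨h', hmem, hlt⟩ := exists_lt_of_csInf_lt ⟨1, one_mem_sibleySet H G⟩ hs
  obtain ⟨h'pos, _, _, c2⟩ := hmem
  have hm1 : h * t < 1 := (lt_div_iff₀ ht).mp hht
  have htlt : t < 1 / h' := by
    rw [lt_div_iff₀ h'pos]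
    nlinarith
  have hinv : (0 : ℝ) < 1 / h' := by positivity
  have hc := (c2 t (by linarith) htlt).1
  have hmono := G.mono' (by linarith : t - h ≤ t - h')
  linarith

/-- Strong neighbourhoods are a self-basis: every point of `N_p(t)` has a
strong neighbourhood contained in `N_p(t)`. -/
lemma nbhd_basis {V : Type*} [AddCommGroup V] [Module ℝ V]
    (ν : V → DistFun) (τ τs : DistFun → DistFun → DistFun)
    (h : IsPNSpace ν τ τs) {p q : V} {t : ℝ} (ht : 0 < t)
    (hq : 1 - t < (ν (q - p)).toFun t) :
    ∃ s : ℝ, 0 < s ∧ ∀ r : V, 1 - s < (ν (r - q)).toFun s →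
      1 - t < (ν (r - p)).toFun t := by
  by_contra hcon
  push_neg at hcon
  have hcon' : ∀ s : ℝ, 0 < s → ∃ r : V,
      1 - s < (ν (r - q)).toFun s ∧ (ν (r - p)).toFun t ≤ 1 - t := by
    intro s hs
    obtain ⟨r, hr1, hr2⟩ := hcon s hs
    exact ⟨r, hr1, hr2⟩
  choose r hr1 hr2 using fun n : ℕ =>
    hcon' (1 / (n + 1 : ℝ)) (by positivity)
  set G := ν (q - p) with hG
  -- the approximating sequence converges to ε₀ in the Sibley metric
  have h1 : Filter.Tendsto (fun n => sibley (ν (r n - q)) eps0) Filter.atTop (nhds 0) := by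
    apply squeeze_zero (fun n => sibley_nonneg _ _) (g := fun n : ℕ => 1 / (n + 1 : ℝ))
    · intro n
      refine sibley_le_eps0 (by positivity) ?_ (hr1 n)
      rw [div_le_one (by positivity)]
      have : (0 : ℝ) ≤ n := Nat.cast_nonneg n
      linarith
    · exact tendsto_one_div_add_atTop_nhds_zero_nat
  have h2 : Filter.Tendsto (fun _ : ℕ => sibley G G) Filter.atTop (nhds 0) := by
    rw [sibley_self]; exact tendsto_const_nhds
  have h3 := h.toIsPPNSpace.cont (fun n => ν (r n - q)) (fun _ => G) eps0 G h1 h2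
  have heq : τ eps0 G = G := by
    rw [h.toIsPPNSpace.tri.comm, h.toIsPPNSpace.tri.ident]
  rw [heq] at h3
  -- choose a good small h₀
  set d := G.toFun t - (1 - t) with hd
  have hdpos : 0 < d := by simp only [hd]; linarith
  have hev : ∀ᶠ y in nhdsWithin t (Set.Iio t),
      G.toFun t - d / 2 < G.toFun y :=
    (G.leftCont' t).eventually (eventually_gt_nhds (by linarith))
  obtain ⟨a, ha, hsub⟩ := mem_nhdsLT_iff_exists_Ioo_subset.mp hev
  have hat : a < t := ha
  set h₀ := min (d / 4) (min ((t - a) / 2) (1 / (t + 1))) with hh₀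
  have h₀pos : 0 < h₀ := by
    refine lt_min (by linarith) (lt_min (by linarith) (by positivity))
  have h₀d : h₀ ≤ d / 4 := min_le_left _ _
  have h₀a : h₀ ≤ (t - a) / 2 := (min_le_right _ _).trans (min_le_left _ _)
  have h₀t : h₀ < 1 / t := by
    have h1' : h₀ ≤ 1 / (t + 1) := (min_le_right _ _).trans (min_le_right _ _)
    have h2' : 1 / (t + 1) < 1 / t :=
      one_div_lt_one_div_of_lt ht (by linarith)
    linarith
  have hGmem : t - h₀ ∈ Set.Ioo a t := ⟨by linarith, by linarith⟩
  have hGlow : G.toFun t - d / 2 < G.toFun (t - h₀) := hsub hGmem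
  -- eventually the Sibley distance is below h₀, giving a contradiction
  have hevn : ∀ᶠ n in Filter.atTop, sibley (τ (ν (r n - q)) G) G < h₀ :=
    h3.eventually (eventually_lt_nhds h₀pos)
  obtain ⟨n, hn⟩ := hevn.exists
  have hlow : G.toFun (t - h₀) - h₀ ≤ (τ (ν (r n - q)) G).toFun t :=
    sibley_lt_imp ht h₀t hn
  have hN3 := h.toIsPPNSpace.N3 (r n - q) (q - p) t
  have hre : r n - q + (q - p) = r n - p := by abel
  rw [hre] at hN3
  have : 1 - t < (ν (r n - p)).toFun t := by
    simp only [hd] at h₀d hGlow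
    linarith
  exact absurd this (not_lt.mpr (hr2 n))

/-- In the strong topology, every open set contains a strong ball around
each of its points. -/
lemma strongOpen_ball {V : Type*} [AddCommGroup V] [Module ℝ V]
    (ν : V → DistFun) (τ τs : DistFun → DistFun → DistFun)
    (h : IsPNSpace ν τ τs) {U : Set V}
    (hU : TopologicalSpace.GenerateOpen
      {S | ∃ (p : V) (t : ℝ), 0 < t ∧ S = {q | 1 - t < (ν (q - p)).toFun t}} U) :
    ∀ q ∈ U, ∃ s : ℝ, 0 < s ∧ {r : V | 1 - s < (ν (r - q)).toFun s} ⊆ U := by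
  induction hU with
  | basic S hS =>
    intro q hq
    obtain ⟨p, t, ht, rfl⟩ := hS
    obtain ⟨s, hs, hball⟩ := nbhd_basis ν τ τs h ht hq
    exact ⟨s, hs, fun r hr => hball r hr⟩
  | univ => exact fun q _ => ⟨1, one_pos, fun _ _ => trivial⟩
  | inter U₁ U₂ _ _ ih₁ ih₂ =>
    intro q hq
    obtain ⟨s₁, hs₁, hb₁⟩ := ih₁ q hq.1
    obtain ⟨s₂, hs₂, hb₂⟩ := ih₂ q hq.2
    refine ⟨min s₁ s₂, lt_min hs₁ hs₂, fun r hr => ?_⟩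
    have hmin₁ : min s₁ s₂ ≤ s₁ := min_le_left _ _
    have hmin₂ : min s₁ s₂ ≤ s₂ := min_le_right _ _
    have hmono₁ := (ν (r - q)).mono' hmin₁
    have hmono₂ := (ν (r - q)).mono' hmin₂
    exact ⟨hb₁ (by simp only [Set.mem_setOf_eq] at hr ⊢; linarith),
           hb₂ (by simp only [Set.mem_setOf_eq] at hr ⊢; linarith)⟩
  | sUnion S _ ih =>
    intro q hq
    obtain ⟨U₀, hU₀S, hqU₀⟩ := hq
    obtain ⟨s, hs, hb⟩ := ih U₀ hU₀S q hqU₀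
    exact ⟨s, hs, fun r hr => ⟨U₀, hU₀S, hb hr⟩⟩

theorem projection_maps_nbhd_onto_and_open {V : Type*} [AddCommGroup V] [Module ℝ V]
    (ν : V → DistFun) (τ τs : DistFun → DistFun → DistFun)
    (h : IsPNSpace ν τ τs) (hτ : SupCont τ) (hτs : SupCont τs)
    (W : Submodule ℝ V)
    (hW : StrongClosed ν (W : Set V))
    (ν' : V ⧸ W → DistFun)
    (hν' : ∀ (p : V) (x : ℝ),
      (ν' (W.mkQ p)).toFun x = ⨆ q : W, (ν (p + (q : V))).toFun x) :
    (∀ (p : V) (t : ℝ), 0 < t →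
      (W.mkQ '' {q : V | 1 - t < (ν (q - p)).toFun t})
        = {a : V ⧸ W | 1 - t < (ν' (a - W.mkQ p)).toFun t}) ∧
    @IsOpenMap V (V ⧸ W) (strongTop ν) (strongTop ν') W.mkQ := by
  -- the key set identity
  have key : ∀ (p : V) (t : ℝ), 0 < t →
      (W.mkQ '' {q : V | 1 - t < (ν (q - p)).toFun t})
        = {a : V ⧸ W | 1 - t < (ν' (a - W.mkQ p)).toFun t} := by
    intro p t ht
    have hbdd : ∀ v : V, BddAbove (Set.range fun w : W => (ν (v + (w : V))).toFun t) :=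
      fun v => ⟨1, by rintro x ⟨w, rfl⟩; exact (ν (v + (w : V))).le_one' t⟩
    ext a
    constructor
    · rintro ⟨q, hq, rfl⟩
      have hsub : W.mkQ q - W.mkQ p = W.mkQ (q - p) := (map_sub W.mkQ q p).symm
      simp only [Set.mem_setOf_eq, hsub, hν']
      have hle : (ν (q - p + ((0 : W) : V))).toFun t ≤
          ⨆ w : W, (ν (q - p + (w : V))).toFun t := le_ciSup (hbdd (q - p)) 0
      simp only [Submodule.coe_zero, add_zero] at hle
      exact lt_of_lt_of_le hq hle
    · intro ha
      obtain ⟨rr, rfl⟩ := Submodule.mkQ_surjective W a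
      have hsub : W.mkQ rr - W.mkQ p = W.mkQ (rr - p) := (map_sub W.mkQ rr p).symm
      simp only [Set.mem_setOf_eq, hsub, hν'] at ha
      obtain ⟨w, hw⟩ := exists_lt_of_lt_ciSup ha
      refine ⟨rr + (w : V), ?_, ?_⟩
      · have : rr + (w : V) - p = rr - p + (w : V) := by abel
        simpa [Set.mem_setOf_eq, this] using hw
      · have : W.mkQ ((w : V)) = 0 := (Submodule.Quotient.mk_eq_zero W).mpr w.2
        simp [map_add, this]
  refine ⟨key, ?_⟩
  -- openness
  intro U hU
  have hU' : TopologicalSpace.GenerateOpen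
      {S | ∃ (p : V) (t : ℝ), 0 < t ∧ S = {q | 1 - t < (ν (q - p)).toFun t}} U := hU
  refine (@isOpen_iff_forall_mem_open _ (strongTop ν') _).mpr ?_
  rintro a ⟨q, hqU, rfl⟩
  obtain ⟨s, hs, hball⟩ := strongOpen_ball ν τ τs h hU' q hqU
  refine ⟨{a : V ⧸ W | 1 - s < (ν' (a - W.mkQ q)).toFun s}, ?_, ?_, ?_⟩
  · rw [← key q s hs]
    exact Set.image_mono hball
  · exact TopologicalSpace.GenerateOpen.basic _ ⟨W.mkQ q, s, hs, rfl⟩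
  · simp only [Set.mem_setOf_eq, sub_self]
    have h0 : (0 : V ⧸ W) = W.mkQ 0 := (map_zero _).symm
    rw [h0, hν']
    have hbdd : BddAbove (Set.range fun w : W => (ν ((0:V) + (w : V))).toFun s) :=
      ⟨1, by rintro x ⟨w, rfl⟩; exact (ν _).le_one' s⟩
    have hle : (ν ((0:V) + ((0 : W) : V))).toFun s ≤
        ⨆ w : W, (ν ((0:V) + (w : V))).toFun s := le_ciSup hbdd 0
    have heps : (ν (0 : V)).toFun s = 1 := by
      rw [h.toIsPPNSpace.N1']
      show (if s ≤ (0:ℝ) then (0:ℝ) else 1) = 1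
      rw [if_neg (not_le.mpr hs)]
    simp only [Submodule.coe_zero, add_zero] at hle
    rw [heps] at hle
    linarith
end

section
/- Let (V, ‖·‖) be a normed space with ν_p := ε_{‖p‖}, and W a closed subspace. For each coset p+W, sup_{w∈W} ε_{‖p+w‖} = ε_{‖p+W‖'}, where ‖p+W‖' = inf_{w∈W} ‖p+w‖ is the quotient norm; i.e., the quotient probabilistic norm of the PN space induced by ‖·‖ coincides with the probabilistic norm induced by the quotient norm on V/W. -/
open Filter Topology Set

theorem quotient_step_norm {V : Type*} [NormedAddCommGroup V] [NormedSpace ℝ V]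
    (W : Submodule ℝ V) (hW : IsClosed (W : Set V)) (p : V) (x : ℝ) :
    (⨆ w : W, (unitStep ‖p + (w : V)‖ (norm_nonneg _)).toFun x)
      = (unitStep (⨅ w : W, ‖p + (w : V)‖)
          (Real.iInf_nonneg fun w => norm_nonneg _)).toFun x := by
  simp only [unitStep]
  set m := ⨅ w : W, ‖p + (w : V)‖ with hm
  have hbdd : BddBelow (Set.range fun w : W => ‖p + (w : V)‖) :=
    ⟨0, by rintro _ ⟨w, rfl⟩; exact norm_nonneg _⟩
  by_cases hx : x ≤ m
  · have hall : ∀ w : W, x ≤ ‖p + (w : V)‖ := fun w => hx.trans (ciInf_le hbdd w)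
    have hNe : Nonempty W := ⟨0⟩
    have heq : (fun w : W => if x ≤ ‖p + (w : V)‖ then (0:ℝ) else 1) = fun _ => 0 :=
      funext fun w => if_pos (hall w)
    simp [if_pos hx, heq]
  · push_neg at hx
    obtain ⟨w, hw⟩ := exists_lt_of_ciInf_lt hx
    have h1 : (⨆ w : W, if x ≤ ‖p + (w : V)‖ then (0:ℝ) else 1) = 1 := by
      apply le_antisymm
      · apply ciSup_le; intro w'; split <;> norm_num
      · have := le_ciSup (f := fun w : W => if x ≤ ‖p + (w : V)‖ then (0:ℝ) else 1)
          ⟨1, by rintro _ ⟨w', rfl⟩; dsimp only; split <;> norm_num⟩ w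
        simpa [if_neg (not_le.mpr hw)] using this
    simp [if_neg (not_le.mpr hx), h1]
end

section
/- Let (V, ν, τ, τ*) be a PN space with τ, τ* sup-continuous and W a closed subspace, and suppose both W (with the restricted norm) and V/W (with the quotient norm ν̄) are strongly complete. Then V is strongly complete. -/
open Filter Topology Set

lemma eps0_apply (x : ℝ) : eps0.toFun x = if x ≤ 0 then 0 else 1 := rfl

lemma sibley_set_nonempty (F G : DistFun) :
    {h : ℝ | 0 < h ∧ h ≤ 1 ∧ levyCond F G h ∧ levyCond G F h}.Nonempty :=
  ⟨1, one_pos, le_rfl, levyCond_one F G, levyCond_one G F⟩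

/-- If `F s > 1 - s` then the Sibley distance of `F` to `ε₀` is at most `s`. -/
lemma sibley_le (F : DistFun) {s : ℝ} (hs : 0 < s) (hs1 : s ≤ 1)
    (hF : 1 - s < F.toFun s) : sibley F eps0 ≤ s := by
  apply csInf_le ⟨0, fun x hx => hx.1.le⟩
  refine ⟨hs, hs1, ?_, ?_⟩
  · intro x _ _
    constructor
    · rcases le_or_gt x 0 with hx | hx
      · have hxs : x - s ≤ 0 := by linarith
        simp only [eps0_apply, if_pos hx, F.zero' _ hxs]
        linarith
      · have := F.le_one' (x - s)
        simp only [eps0_apply, if_neg (not_le.mpr hx)]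
        linarith
    · rcases le_or_gt x 0 with hx | hx
      · have := F.nonneg (x + s)
        simp only [eps0_apply, if_pos hx]
        linarith
      · have h1 : F.toFun s ≤ F.toFun (x + s) := F.mono' (by linarith)
        simp only [eps0_apply, if_neg (not_le.mpr hx)]
        linarith
  · intro x _ _
    constructor
    · rcases le_or_gt (x - s) 0 with hx | hx
      · have := F.nonneg x
        simp only [eps0_apply, if_pos hx]
        linarith
      · have h1 : F.toFun s ≤ F.toFun x := F.mono' (by linarith)
        simp only [eps0_apply, if_neg (not_le.mpr hx)]
        linarith
    · rcases le_or_gt (x + s) 0 with hx | hx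
      · have hx0 : x ≤ 0 := by linarith
        simp only [eps0_apply, if_pos hx, F.zero' _ hx0, if_pos hx0]
        linarith
      · have := F.le_one' x
        simp only [eps0_apply, if_neg (not_le.mpr hx)]
        linarith

/-- If the Sibley distance of `F` to `ε₀` is `< t ≤ 1` then `F t > 1 - t`. -/
lemma lt_of_sibley_lt (F : DistFun) {t : ℝ} (ht : 0 < t) (ht1 : t ≤ 1)
    (hd : sibley F eps0 < t) : 1 - t < F.toFun t := by
  obtain ⟨hh, hhS, hht⟩ := exists_lt_of_csInf_lt (sibley_set_nonempty F eps0) hd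
  obtain ⟨hh0, hh1, _, hc⟩ := hhS
  have hlt : t < 1 / hh := by
    rw [lt_div_iff₀ hh0]
    nlinarith
  have hgt : -(1 / hh) < t := by
    have : 0 < 1 / hh := by positivity
    linarith
  have := (hc t hgt hlt).1
  have hts : 0 < t - hh := by linarith
  rw [eps0_apply, if_neg (not_le.mpr hts)] at this
  linarith

lemma tendsto_sibley_zero (F : ℕ → DistFun) (s : ℕ → ℝ)
    (hs : ∀ n, 0 < s n ∧ s n ≤ 1 ∧ 1 - s n < (F n).toFun (s n))
    (hs0 : Filter.Tendsto s Filter.atTop (nhds 0)) :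
    Filter.Tendsto (fun n => sibley (F n) eps0) Filter.atTop (nhds 0) := by
  apply tendsto_of_tendsto_of_tendsto_of_le_of_le tendsto_const_nhds hs0
  · exact fun n => sibley_nonneg _ _
  · exact fun n => sibley_le _ (hs n).1 (hs n).2.1 (hs n).2.2

/-- Uniform continuity of a triangle function at `(ε₀, ε₀)`. -/
lemma uniform_tau (τ : DistFun → DistFun → DistFun)
    (htf : IsTriangleFun τ) (hc : TriCont τ) :
    ∀ t : ℝ, 0 < t → ∃ s : ℝ, 0 < s ∧ s ≤ t ∧
      ∀ F G : DistFun, 1 - s < F.toFun s → 1 - s < G.toFun s →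
        1 - t < (τ F G).toFun t := by
  intro t ht
  rcases le_or_gt t 1 with ht1 | ht1
  swap
  · exact ⟨1, one_pos, ht1.le, fun F G _ _ => lt_of_lt_of_le (by linarith)
      ((τ F G).nonneg t)⟩
  by_contra hcon
  push_neg at hcon
  have key : ∀ n : ℕ, ∃ F G : DistFun,
      (1 - min t (1 / (n + 1)) < F.toFun (min t (1 / (n + 1)))) ∧
      (1 - min t (1 / (n + 1)) < G.toFun (min t (1 / (n + 1)))) ∧
      (τ F G).toFun t ≤ 1 - t := by
    intro n
    have h1 : (0 : ℝ) < min t (1 / (n + 1)) := by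
      apply lt_min ht; positivity
    obtain ⟨F, G, hF, hG, hFG⟩ := hcon _ h1 (min_le_left _ _)
    exact ⟨F, G, hF, hG, hFG⟩
  choose F G hF hG hFG using key
  have hsn : Filter.Tendsto (fun n : ℕ => min t (1 / ((n : ℝ) + 1)))
      Filter.atTop (nhds 0) := by
    apply tendsto_of_tendsto_of_tendsto_of_le_of_le tendsto_const_nhds
      tendsto_one_div_add_atTop_nhds_zero_nat
    · intro n; positivity
    · intro n; exact min_le_right _ _
  have hsle : ∀ n : ℕ, min t (1 / ((n : ℝ) + 1)) ≤ 1 :=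
    fun n => le_trans (min_le_left _ _) ht1
  have hFd := tendsto_sibley_zero F _
    (fun n => ⟨lt_min ht (by positivity), hsle n, hF n⟩) hsn
  have hGd := tendsto_sibley_zero G _
    (fun n => ⟨lt_min ht (by positivity), hsle n, hG n⟩) hsn
  have htend := hc F G eps0 eps0 hFd hGd
  rw [htf.ident] at htend
  have hev : ∀ᶠ n in Filter.atTop, sibley (τ (F n) (G n)) eps0 < t := by
    exact htend.eventually (Filter.Tendsto.eventually_lt_const ht tendsto_id)
  obtain ⟨n, hn⟩ := hev.exists
  exact absurd (lt_of_sibley_lt _ ht ht1 hn) (not_lt.mpr (hFG n))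

lemma DistFun.le_apply {F G : DistFun} (h : F ≤ G) (x : ℝ) :
    F.toFun x ≤ G.toFun x := h x

/-- Quantitative triangle inequality for two terms. -/
lemma nu_combine2 {V : Type*} [AddCommGroup V] [Module ℝ V]
    {ν : V → DistFun} {τ τs : DistFun → DistFun → DistFun}
    (h : IsPNSpace ν τ τs) :
    ∀ t : ℝ, 0 < t → ∃ s : ℝ, 0 < s ∧ s ≤ t ∧
      ∀ a b : V, 1 - s < (ν a).toFun s → 1 - s < (ν b).toFun s →
        1 - t < (ν (a + b)).toFun t := by
  intro t ht
  obtain ⟨s, hs, hst, hp⟩ := uniform_tau τ h.tri h.cont t ht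
  refine ⟨s, hs, hst, fun a b ha hb => ?_⟩
  exact lt_of_lt_of_le (hp _ _ ha hb) (DistFun.le_apply (h.N3 a b) t)

lemma mono_level {V : Type*} [AddCommGroup V] {ν : V → DistFun}
    {a : V} {s s' : ℝ} (hss : s' ≤ s) (ha : 1 - s' < (ν a).toFun s') :
    1 - s < (ν a).toFun s :=
  by have := (ν a).mono' hss; linarith

/-- Quantitative triangle inequality for three terms. -/
lemma nu_combine3 {V : Type*} [AddCommGroup V] [Module ℝ V]
    {ν : V → DistFun} {τ τs : DistFun → DistFun → DistFun}
    (h : IsPNSpace ν τ τs) :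
    ∀ t : ℝ, 0 < t → ∃ s : ℝ, 0 < s ∧ s ≤ t ∧
      ∀ a b c : V, 1 - s < (ν a).toFun s → 1 - s < (ν b).toFun s →
        1 - s < (ν c).toFun s → 1 - t < (ν (a + b + c)).toFun t := by
  intro t ht
  obtain ⟨s₁, hs₁, hs₁t, hp₁⟩ := nu_combine2 h t ht
  obtain ⟨s₂, hs₂, hs₂t, hp₂⟩ := nu_combine2 h s₁ hs₁
  refine ⟨s₂, hs₂, hs₂t.trans hs₁t, fun a b c ha hb hc => ?_⟩
  exact hp₁ _ _ (hp₂ a b ha hb) (mono_level hs₂t hc)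

theorem complete_of_subspace_and_quotient_complete {V : Type*} [AddCommGroup V] [Module ℝ V]
    (ν : V → DistFun) (τ τs : DistFun → DistFun → DistFun)
    (h : IsPNSpace ν τ τs) (hτ : SupCont τ) (hτs : SupCont τs)
    (W : Submodule ℝ V)
    (hW : StrongClosed ν (W : Set V))
    (ν' : V ⧸ W → DistFun)
    (hν' : ∀ (p : V) (x : ℝ),
      (ν' (W.mkQ p)).toFun x = ⨆ q : W, (ν (p + (q : V))).toFun x)
    (hWc : StrongComplete (fun w : W => ν (w : V)))
    (hQc : StrongComplete ν') :
    StrongComplete ν := by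
  intro p hp
  -- the quotient norm dominates the norm
  have hbdd : ∀ (v : V) (x : ℝ),
      BddAbove (Set.range fun q : W => (ν (v + (q : V))).toFun x) := by
    intro v x
    refine ⟨1, ?_⟩
    rintro y ⟨q, rfl⟩
    exact (ν _).le_one' x
  have hquot_ge : ∀ (v : V) (x : ℝ), (ν v).toFun x ≤ (ν' (W.mkQ v)).toFun x := by
    intro v x
    rw [hν']
    have := le_ciSup (hbdd v x) (⟨0, W.zero_mem⟩ : W)
    simpa using this
  -- the projected sequence is Cauchy in the quotient
  have hqc : StrongCauchy ν' (fun n => W.mkQ (p n)) := by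
    intro t ht
    obtain ⟨N, hN⟩ := hp t ht
    refine ⟨N, fun m n hm hn => ?_⟩
    have he : W.mkQ (p n) - W.mkQ (p m) = W.mkQ (p n - p m) := (map_sub _ _ _).symm
    simp only [he]
    exact lt_of_lt_of_le (hN m n hm hn) (hquot_ge _ _)
  obtain ⟨xq, hxq⟩ := hQc _ hqc
  obtain ⟨x, rfl⟩ := W.mkQ_surjective xq
  -- the levels t_k = 1/(k+1)
  set tk : ℕ → ℝ := fun k => 1 / ((k : ℝ) + 1) with htk
  have htkpos : ∀ k, 0 < tk k := by intro k; positivity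
  have htk_small : ∀ s : ℝ, 0 < s → ∃ k0 : ℕ, ∀ k, k0 ≤ k → tk k ≤ s := by
    intro s hs
    obtain ⟨k0, hk0⟩ := exists_nat_one_div_lt hs
    refine ⟨k0, fun k hk => ?_⟩
    have h1 : (k0 : ℝ) + 1 ≤ (k : ℝ) + 1 := by exact_mod_cast Nat.succ_le_succ hk
    calc tk k ≤ 1 / ((k0 : ℝ) + 1) :=
          one_div_le_one_div_of_le (by positivity) h1
      _ ≤ s := hk0.le
  -- extract indices
  have hconv : ∀ k : ℕ, ∃ N : ℕ, ∀ n, N ≤ n →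
      1 - tk k < (ν' (W.mkQ (p n) - W.mkQ x)).toFun (tk k) := by
    intro k
    obtain ⟨N, hN⟩ := hxq (tk k) (htkpos k)
    exact ⟨N, fun n hn => hN n hn⟩
  choose N0 hN0 using hconv
  set nn : ℕ → ℕ := fun k => k + (Finset.range (k + 1)).sup N0 with hnn
  have hnk1 : ∀ k, k ≤ nn k := fun k => Nat.le_add_right _ _
  have hnk2 : ∀ k, N0 k ≤ nn k := by
    intro k
    exact le_trans (Finset.le_sup (Finset.self_mem_range_succ k)) (Nat.le_add_left _ _)
  -- choose representatives in W
  have hex : ∀ k : ℕ, ∃ q : W,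
      1 - tk k < (ν (p (nn k) - x + (q : V))).toFun (tk k) := by
    intro k
    have h1 := hN0 k (nn k) (hnk2 k)
    rw [← map_sub, hν'] at h1
    exact exists_lt_of_lt_ciSup h1
  choose q hq using hex
  -- q is Cauchy in W
  have hqC : StrongCauchy (fun w : W => ν (w : V)) q := by
    intro t ht
    obtain ⟨s, hs, hst, hcomb⟩ := nu_combine3 h t ht
    obtain ⟨Nc, hNc⟩ := hp s hs
    obtain ⟨k0, hk0⟩ := htk_small s hs
    refine ⟨max k0 Nc, fun j k hj hk => ?_⟩
    have hA : 1 - s < (ν (p (nn k) - x + (q k : V))).toFun s :=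
      mono_level (hk0 k (le_trans (le_max_left _ _) hk)) (hq k)
    have hB : 1 - s < (ν (-(p (nn j) - x + (q j : V)))).toFun s := by
      rw [h.N2]
      exact mono_level (hk0 j (le_trans (le_max_left _ _) hj)) (hq j)
    have hC : 1 - s < (ν (p (nn j) - p (nn k))).toFun s := by
      refine hNc (nn k) (nn j) ?_ ?_
      · exact le_trans (le_trans (le_max_right _ _) hk) (hnk1 k)
      · exact le_trans (le_trans (le_max_right _ _) hj) (hnk1 j)
    have hsum := hcomb _ _ _ hA hB hC
    have heq : (p (nn k) - x + (q k : V)) + (-(p (nn j) - x + (q j : V)))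
        + (p (nn j) - p (nn k)) = (q k : V) - (q j : V) := by abel
    rw [heq] at hsum
    simpa using hsum
  obtain ⟨w, hw⟩ := hWc q hqC
  refine ⟨x - (w : V), ?_⟩
  intro t ht
  obtain ⟨s, hs, hst, hcomb⟩ := nu_combine3 h t ht
  obtain ⟨Nc, hNc⟩ := hp s hs
  obtain ⟨k0, hk0⟩ := htk_small s hs
  obtain ⟨K1, hK1⟩ := hw s hs
  set k := max (max k0 Nc) K1 with hkdef
  refine ⟨Nc, fun m hm => ?_⟩
  have hA : 1 - s < (ν (p m - p (nn k))).toFun s := by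
    refine hNc (nn k) m ?_ hm
    exact le_trans (le_trans (le_max_right _ _) (le_max_left _ _)) (hnk1 k)
  have hB : 1 - s < (ν (p (nn k) - x + (q k : V))).toFun s :=
    mono_level (hk0 k (le_trans (le_max_left _ _) (le_max_left _ _))) (hq k)
  have hC : 1 - s < (ν ((w : V) - (q k : V))).toFun s := by
    have h1 := hK1 k (le_max_right _ _)
    have h2 : ((q k - w : W) : V) = (q k : V) - (w : V) := by push_cast; ring
    rw [show (w : V) - (q k : V) = -((q k : V) - (w : V)) by abel, h.N2, ← h2]
    simpa using h1
  have hsum := hcomb _ _ _ hA hB hC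
  have heq : (p m - p (nn k)) + (p (nn k) - x + (q k : V)) + ((w : V) - (q k : V))
      = p m - (x - (w : V)) := by abel
  rw [heq] at hsum
  exact hsum
end

section
/- Let (V, ν, τ, τ*) be a strongly complete PN space with τ, τ* sup-continuous and W a closed subspace. Then both the subspace (W, ν|_W, τ, τ*) and the quotient (V/W, ν̄, τ, τ*) are strongly complete; conversely, if any two of V, W, V/W are strongly complete, so is the third. -/
open Filter Topology Set

namespace PNAux

open Filter Topology Set

lemma DF_nonneg (F : DistFun) (x : ℝ) : 0 ≤ F.toFun x := by
  have h0 : F.toFun (min x 0) = 0 := F.zero' _ (min_le_right _ _)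
  have h1 := F.mono' (min_le_left x 0)
  linarith

lemma DF_shrink {F : DistFun} {s t : ℝ} (hst : s ≤ t) (h : 1 - s < F.toFun s) :
    1 - t < F.toFun t :=
  lt_of_lt_of_le (lt_of_le_of_lt (by linarith) h) (F.mono' hst)

lemma DF_ext {F G : DistFun} (h : ∀ x, F.toFun x = G.toFun x) : F = G := by
  cases F; cases G
  have hfg : _ = _ := funext h
  subst hfg
  rfl

lemma eps0_pos {t : ℝ} (ht : 0 < t) : eps0.toFun t = 1 := by
  simp [eps0, unitStep, ht.not_ge]

lemma levyCond_one (F G : DistFun) : levyCond F G 1 := by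
  intro x _ _
  constructor
  · have h1 := F.le_one' (x - 1); have h2 := DF_nonneg G x; linarith
  · have h1 := G.le_one' x; have h2 := DF_nonneg F (x + 1); linarith

lemma one_mem_sibSet (F G : DistFun) :
    (1:ℝ) ∈ {h : ℝ | 0 < h ∧ h ≤ 1 ∧ levyCond F G h ∧ levyCond G F h} :=
  ⟨one_pos, le_rfl, levyCond_one F G, levyCond_one G F⟩

lemma sibSet_nonempty (F G : DistFun) :
    Set.Nonempty {h : ℝ | 0 < h ∧ h ≤ 1 ∧ levyCond F G h ∧ levyCond G F h} :=
  ⟨1, one_mem_sibSet F G⟩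

lemma sibSet_bdd (F G : DistFun) :
    BddBelow {h : ℝ | 0 < h ∧ h ≤ 1 ∧ levyCond F G h ∧ levyCond G F h} :=
  ⟨0, fun _ hh => le_of_lt hh.1⟩

lemma sibley_nonneg (F G : DistFun) : 0 ≤ sibley F G :=
  Real.sInf_nonneg (fun _ hx => le_of_lt hx.1)

lemma sibley_self (F : DistFun) : sibley F F = 0 := by
  have hset : {h : ℝ | 0 < h ∧ h ≤ 1 ∧ levyCond F F h ∧ levyCond F F h} = Set.Ioc 0 1 := by
    ext h
    constructor
    · rintro ⟨h1, h2, _, _⟩; exact ⟨h1, h2⟩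
    · rintro ⟨h1, h2⟩
      have hl : levyCond F F h := by
        intro x _ _
        constructor
        · have := F.mono' (show x - h ≤ x by linarith); linarith
        · have := F.mono' (show x ≤ x + h by linarith); linarith
      exact ⟨h1, h2, hl, hl⟩
  rw [sibley, hset, csInf_Ioc one_pos]

lemma sibley_le_eps0 {F : DistFun} {t : ℝ} (h0 : 0 < t) (h1 : t ≤ 1)
    (hF : 1 - t < F.toFun t) : sibley F eps0 ≤ t := by
  apply csInf_le (sibSet_bdd _ _)
  refine ⟨h0, h1, ?_, ?_⟩
  · intro x _ _
    constructor
    · by_cases hx : x ≤ 0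
      · have hxt : x - t ≤ 0 := by linarith
        rw [F.zero' _ hxt, eps0.zero' x hx]
        linarith
      · rw [eps0_pos (not_le.mp hx)]
        have := F.le_one' (x - t)
        linarith
    · by_cases hx : x ≤ 0
      · rw [eps0.zero' x hx]
        have := DF_nonneg F (x + t); linarith
      · rw [eps0_pos (not_le.mp hx)]
        have := F.mono' (show t ≤ x + t by linarith)
        linarith
  · intro x _ _
    constructor
    · by_cases hx : x - t ≤ 0
      · rw [eps0.zero' _ hx]
        have := DF_nonneg F x; linarith
      · rw [eps0_pos (show (0:ℝ) < x - t by linarith)]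
        have := F.mono' (show t ≤ x by linarith)
        linarith
    · by_cases hx : x + t ≤ 0
      · rw [eps0.zero' _ hx]
        have : F.toFun x = 0 := F.zero' x (by linarith)
        linarith
      · rw [eps0_pos (not_le.mp hx)]
        have := F.le_one' x; linarith

lemma lt_of_sibley_small {F : DistFun} {t : ℝ} (h0 : 0 < t) (h1 : t ≤ 1)
    (hF : 1 - t < F.toFun t) :
    ∃ h₀ : ℝ, 0 < h₀ ∧ ∀ H : DistFun, sibley H F < h₀ → 1 - t < H.toFun t := by
  obtain ⟨s₀, hs₀F, hs₀t⟩ : ∃ s₀, 1 - t < F.toFun s₀ ∧ s₀ < t := by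
    have hev := (F.leftCont' t).eventually (eventually_gt_nhds hF)
    obtain ⟨s₀, h1', h2'⟩ := (hev.and self_mem_nhdsWithin).exists
    exact ⟨s₀, h1', h2'⟩
  set c : ℝ := F.toFun s₀ - (1 - t) with hc
  have hcpos : 0 < c := by simp only [hc]; linarith
  have hcle : c ≤ t := by
    have := F.le_one' s₀; simp only [hc]; linarith
  refine ⟨min (t - s₀) c, lt_min (by linarith) hcpos, ?_⟩
  intro H hH
  obtain ⟨h', hmem, hlt⟩ := exists_lt_of_csInf_lt (sibSet_nonempty H F) hH
  obtain ⟨hp, hle1, _, hFH⟩ := hmem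
  have hh'c : h' < c := lt_of_lt_of_le hlt (min_le_right _ _)
  have hh'ts : h' < t - s₀ := lt_of_lt_of_le hlt (min_le_left _ _)
  have hh'1 : h' < 1 := lt_of_lt_of_le hh'c (le_trans hcle h1)
  have hdom : t < 1 / h' := by
    rw [lt_div_iff₀ hp]
    nlinarith
  have hneg : -(1 / h') < t := by
    have : (0:ℝ) < 1 / h' := by positivity
    linarith
  obtain ⟨hlow, _⟩ := hFH t hneg hdom
  have hmono : F.toFun s₀ ≤ F.toFun (t - h') := F.mono' (by linarith)
  simp only [hc] at hh'c
  linarith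

lemma exists_eta {τ : DistFun → DistFun → DistFun} (ht : IsTriangleFun τ) (hc : TriCont τ)
    {t : ℝ} (h0 : 0 < t) (h1 : t ≤ 1) :
    ∃ η : ℝ, 0 < η ∧ η ≤ 1 ∧ η ≤ t ∧ ∀ F G : DistFun,
      1 - η < F.toFun η → 1 - η < G.toFun η → 1 - t < (τ F G).toFun t := by
  suffices hsuf : ∃ η : ℝ, 0 < η ∧ η ≤ 1 ∧ ∀ F G : DistFun,
      1 - η < F.toFun η → 1 - η < G.toFun η → 1 - t < (τ F G).toFun t by
    obtain ⟨η, hη0, hη1, hη⟩ := hsuf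
    exact ⟨min η t, lt_min hη0 h0, le_trans (min_le_left _ _) hη1, min_le_right _ _,
      fun F G hF hG => hη F G (DF_shrink (min_le_left _ _) hF)
        (DF_shrink (min_le_left _ _) hG)⟩
  by_contra hcon
  push_neg at hcon
  have hch : ∀ n : ℕ, ∃ F G : DistFun,
      (1 - 1/((n:ℝ)+1) < F.toFun (1/((n:ℝ)+1))) ∧ (1 - 1/((n:ℝ)+1) < G.toFun (1/((n:ℝ)+1))) ∧
      (τ F G).toFun t ≤ 1 - t := by
    intro n
    have hpos : (0:ℝ) < 1/((n:ℝ)+1) := by positivity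
    have hle : (1:ℝ)/((n:ℝ)+1) ≤ 1 := by
      rw [div_le_one (by positivity)]
      have := Nat.cast_nonneg (α := ℝ) n
      linarith
    exact hcon _ hpos hle
  choose F G hF hG hFG using hch
  have hFs : Tendsto (fun n => sibley (F n) eps0) atTop (nhds 0) := by
    apply squeeze_zero (fun n => sibley_nonneg _ _)
      (fun n => sibley_le_eps0 (by positivity)
        (by rw [div_le_one (by positivity)]; have := Nat.cast_nonneg (α := ℝ) n; linarith) (hF n))
    exact tendsto_one_div_add_atTop_nhds_zero_nat
  have hGs : Tendsto (fun n => sibley (G n) eps0) atTop (nhds 0) := by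
    apply squeeze_zero (fun n => sibley_nonneg _ _)
      (fun n => sibley_le_eps0 (by positivity)
        (by rw [div_le_one (by positivity)]; have := Nat.cast_nonneg (α := ℝ) n; linarith) (hG n))
    exact tendsto_one_div_add_atTop_nhds_zero_nat
  have htend := hc F G eps0 eps0 hFs hGs
  rw [ht.ident eps0] at htend
  obtain ⟨h₀, hh₀, hkey⟩ := lt_of_sibley_small (F := eps0) h0 h1 (by rw [eps0_pos h0]; linarith)
  obtain ⟨n, hn⟩ := (htend.eventually_lt_const hh₀).exists
  exact absurd (hkey _ hn) (not_lt.mpr (hFG n))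

lemma exists_eta_one {τ : DistFun → DistFun → DistFun} (ht : IsTriangleFun τ) (hc : TriCont τ)
    (F₀ : DistFun) {t : ℝ} (h0 : 0 < t) (h1 : t ≤ 1) (hF₀ : 1 - t < F₀.toFun t) :
    ∃ η : ℝ, 0 < η ∧ η ≤ 1 ∧ ∀ G : DistFun,
      1 - η < G.toFun η → 1 - t < (τ G F₀).toFun t := by
  by_contra hcon
  push_neg at hcon
  have hch : ∀ n : ℕ, ∃ G : DistFun,
      (1 - 1/((n:ℝ)+1) < G.toFun (1/((n:ℝ)+1))) ∧ (τ G F₀).toFun t ≤ 1 - t := by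
    intro n
    have hpos : (0:ℝ) < 1/((n:ℝ)+1) := by positivity
    have hle : (1:ℝ)/((n:ℝ)+1) ≤ 1 := by
      rw [div_le_one (by positivity)]
      have := Nat.cast_nonneg (α := ℝ) n
      linarith
    exact hcon _ hpos hle
  choose G hG hGF using hch
  have hGs : Tendsto (fun n => sibley (G n) eps0) atTop (nhds 0) := by
    apply squeeze_zero (fun n => sibley_nonneg _ _)
      (fun n => sibley_le_eps0 (by positivity)
        (by rw [div_le_one (by positivity)]; have := Nat.cast_nonneg (α := ℝ) n; linarith) (hG n))
    exact tendsto_one_div_add_atTop_nhds_zero_nat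
  have hFs : Tendsto (fun n => sibley ((fun _ : ℕ => F₀) n) F₀) atTop (nhds 0) := by
    simpa [sibley_self] using tendsto_const_nhds (α := ℝ) (f := atTop (α := ℕ))
  have htend := hc G (fun _ => F₀) eps0 F₀ hGs hFs
  have hid : τ eps0 F₀ = F₀ := by rw [ht.comm, ht.ident]
  rw [hid] at htend
  obtain ⟨h₀, hh₀, hkey⟩ := lt_of_sibley_small h0 h1 hF₀
  obtain ⟨n, hn⟩ := (htend.eventually_lt_const hh₀).exists
  exact absurd (hkey _ hn) (not_lt.mpr (hGF n))

lemma exists_chain {τ : DistFun → DistFun → DistFun} (ht : IsTriangleFun τ) (hc : TriCont τ) :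
    ∃ η : ℕ → ℝ, (∀ k, 0 < η k) ∧ (∀ k, η k ≤ 1) ∧ (∀ k, η (k+1) ≤ η k / 2) ∧
      (∀ k (F G : DistFun), 1 - η (k+1) < F.toFun (η (k+1)) →
        1 - η (k+1) < G.toFun (η (k+1)) → 1 - η k < (τ F G).toFun (η k)) := by
  have H : ∀ s : {x : ℝ // 0 < x ∧ x ≤ 1}, ∃ s' : {x : ℝ // 0 < x ∧ x ≤ 1},
      s'.1 ≤ s.1 / 2 ∧ ∀ F G : DistFun, 1 - s'.1 < F.toFun s'.1 →
        1 - s'.1 < G.toFun s'.1 → 1 - s.1 < (τ F G).toFun s.1 := by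
    rintro ⟨s, hs0, hs1⟩
    obtain ⟨η, hη0, hη1, _, hη⟩ := exists_eta ht hc hs0 hs1
    refine ⟨⟨min η (s/2), lt_min hη0 (by positivity), le_trans (min_le_left _ _) hη1⟩,
      min_le_right _ _, ?_⟩
    intro F G hF hG
    exact hη F G (DF_shrink (min_le_left η (s/2)) hF) (DF_shrink (min_le_left η (s/2)) hG)
  choose E hE1 hE2 using H
  refine ⟨fun k => (E^[k] ⟨1, one_pos, le_rfl⟩).1,
    fun k => (E^[k] ⟨1, one_pos, le_rfl⟩).2.1,
    fun k => (E^[k] ⟨1, one_pos, le_rfl⟩).2.2, ?_, ?_⟩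
  · intro k
    simp only [Function.iterate_succ_apply']
    exact hE1 _
  · intro k F G hF hG
    simp only [Function.iterate_succ_apply'] at hF hG ⊢
    exact hE2 _ F G hF hG

lemma chain_mono {η : ℕ → ℝ} (hpos : ∀ k, 0 < η k) (hhalf : ∀ k, η (k+1) ≤ η k / 2) :
    ∀ {k m : ℕ}, k ≤ m → η m ≤ η k := by
  intro k m hkm
  induction m, hkm using Nat.le_induction with
  | base => exact le_rfl
  | succ m hm ih =>
    have h1 := hhalf m; have h2 := hpos m; linarith

lemma chain_small {η : ℕ → ℝ} (h1 : ∀ k, η k ≤ 1) (hhalf : ∀ k, η (k+1) ≤ η k / 2)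
    {t : ℝ} (ht : 0 < t) : ∃ k, η k < t := by
  have hb : ∀ k, η k ≤ (1/2 : ℝ)^k := by
    intro k
    induction k with
    | zero => simpa using h1 0
    | succ k ih =>
      have := hhalf k
      rw [pow_succ]
      linarith
  obtain ⟨k, hk⟩ := exists_pow_lt_of_lt_one ht (by norm_num : (1/2:ℝ) < 1)
  exact ⟨k, lt_of_le_of_lt (hb k) hk⟩

lemma chain_sum {V : Type*} [AddCommGroup V] {ν : V → DistFun}
    {τ : DistFun → DistFun → DistFun}
    (hN3 : ∀ a b : V, ∀ x : ℝ, (τ (ν a) (ν b)).toFun x ≤ (ν (a+b)).toFun x)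
    {η : ℕ → ℝ} (hpos : ∀ k, 0 < η k) (hhalf : ∀ k, η (k+1) ≤ η k / 2)
    (hchain : ∀ k (F G : DistFun), 1 - η (k+1) < F.toFun (η (k+1)) →
      1 - η (k+1) < G.toFun (η (k+1)) → 1 - η k < (τ F G).toFun (η k))
    {q : ℕ → V} (hq : ∀ k, 1 - η (k+1) < (ν (q (k+1) - q k)).toFun (η (k+1))) :
    ∀ gap m : ℕ, 1 - η m < (ν (q (m + gap + 1) - q m)).toFun (η m) := by
  intro gap
  induction gap with
  | zero =>
    intro m
    have hle : η (m+1) ≤ η m := by have := hhalf m; have := hpos m; linarith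
    exact DF_shrink hle (hq m)
  | succ gap ih =>
    intro m
    have h1 : 1 - η (m+1) < (ν (q (m+1) - q m)).toFun (η (m+1)) := hq m
    have h2 : 1 - η (m+1) < (ν (q (m + gap + 2) - q (m+1))).toFun (η (m+1)) := by
      have h := ih (m+1)
      rwa [show m+1+gap+1 = m+gap+2 from by omega] at h
    have h3 := hchain m _ _ h1 h2
    have h4 := hN3 (q (m+1) - q m) (q (m + gap + 2) - q (m+1)) (η m)
    rw [show (q (m+1) - q m) + (q (m + gap + 2) - q (m+1)) = q (m + gap + 2) - q m from by
      abel] at h4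
    have := lt_of_lt_of_le h3 h4
    rwa [show m + (gap+1) + 1 = m + gap + 2 from by omega]

lemma cauchy_of_chain {V : Type*} [AddCommGroup V] {ν : V → DistFun}
    {τ : DistFun → DistFun → DistFun}
    (hN3 : ∀ a b : V, ∀ x : ℝ, (τ (ν a) (ν b)).toFun x ≤ (ν (a+b)).toFun x)
    (hN2 : ∀ a : V, ν (-a) = ν a)
    (hν0 : ∀ t : ℝ, 0 < t → 1 - t < (ν 0).toFun t)
    {η : ℕ → ℝ} (hpos : ∀ k, 0 < η k) (hle1 : ∀ k, η k ≤ 1)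
    (hhalf : ∀ k, η (k+1) ≤ η k / 2)
    (hchain : ∀ k (F G : DistFun), 1 - η (k+1) < F.toFun (η (k+1)) →
      1 - η (k+1) < G.toFun (η (k+1)) → 1 - η k < (τ F G).toFun (η k))
    {q : ℕ → V} (hq : ∀ k, 1 - η (k+1) < (ν (q (k+1) - q k)).toFun (η (k+1))) :
    StrongCauchy ν q := by
  intro t ht
  obtain ⟨K, hK⟩ := chain_small hle1 hhalf ht
  refine ⟨K, ?_⟩
  intro m n hm hn
  rcases lt_trichotomy m n with hmn | rfl | hmn
  · have h := chain_sum hN3 hpos hhalf hchain hq (n - m - 1) m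
    rw [show m + (n - m - 1) + 1 = n from by omega] at h
    exact DF_shrink (le_of_lt (lt_of_le_of_lt (chain_mono hpos hhalf hm) hK)) h
  · rw [sub_self]
    exact hν0 t ht
  · have h := chain_sum hN3 hpos hhalf hchain hq (m - n - 1) n
    rw [show n + (m - n - 1) + 1 = m from by omega] at h
    rw [show q n - q m = -(q m - q n) from by abel, hN2]
    exact DF_shrink (le_of_lt (lt_of_le_of_lt (chain_mono hpos hhalf hn) hK)) h

lemma conv_of_subseq {V : Type*} [AddCommGroup V] {ν : V → DistFun}
    {τ : DistFun → DistFun → DistFun} (ht : IsTriangleFun τ) (hc : TriCont τ)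
    (hN3 : ∀ a b : V, ∀ x : ℝ, (τ (ν a) (ν b)).toFun x ≤ (ν (a+b)).toFun x)
    {p : ℕ → V} (hp : StrongCauchy ν p) {n : ℕ → ℕ} (hn : StrictMono n)
    {x : V} (hx : StrongConv ν (fun k => p (n k)) x) : StrongConv ν p x := by
  intro t htpos
  rcases le_or_gt t 1 with ht1 | ht1
  · obtain ⟨η, hη0, hη1, _, hη⟩ := exists_eta ht hc htpos ht1
    obtain ⟨N₁, hN₁⟩ := hp η hη0
    obtain ⟨K, hK⟩ := hx η hη0
    refine ⟨n (max K N₁), ?_⟩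
    intro j hj
    have hk₀ : N₁ ≤ n (max K N₁) := le_trans (le_max_right _ _) hn.le_apply
    have h1 : 1 - η < (ν (p j - p (n (max K N₁)))).toFun η :=
      hN₁ (n (max K N₁)) j hk₀ (le_trans hk₀ hj)
    have h2 : 1 - η < (ν (p (n (max K N₁)) - x)).toFun η := hK _ (le_max_left _ _)
    have h3 := hη _ _ h1 h2
    have h4 := hN3 (p j - p (n (max K N₁))) (p (n (max K N₁)) - x) t
    rw [show (p j - p (n (max K N₁))) + (p (n (max K N₁)) - x) = p j - x from by abel] at h4
    exact lt_of_lt_of_le h3 h4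
  · exact ⟨0, fun j _ => lt_of_lt_of_le (by linarith) (DF_nonneg _ _)⟩

lemma exists_mono_ge (B : ℕ → ℕ) : ∃ n : ℕ → ℕ, StrictMono n ∧ ∀ k, B k ≤ n k := by
  refine ⟨fun k => Nat.rec (B 0) (fun k ih => max (ih + 1) (B (k+1))) k, ?_, ?_⟩
  · apply strictMono_nat_of_lt_succ
    intro k
    exact lt_of_lt_of_le (Nat.lt_succ_self _) (le_max_left _ _)
  · intro k
    cases k with
    | zero => exact le_rfl
    | succ k => exact le_max_right _ _

end PNAux
namespace PNAux

open Filter Topology Set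

lemma q_bdd {V : Type*} [AddCommGroup V] [Module ℝ V] (ν : V → DistFun)
    (W : Submodule ℝ V) (a : V) (x : ℝ) :
    BddAbove (Set.range fun q : W => (ν (a + (q:V))).toFun x) := by
  refine ⟨1, ?_⟩
  rintro r ⟨q, rfl⟩
  exact (ν _).le_one' x

lemma q_ge {V : Type*} [AddCommGroup V] [Module ℝ V] (ν : V → DistFun)
    (W : Submodule ℝ V) (ν' : V ⧸ W → DistFun)
    (hν' : ∀ (p : V) (x : ℝ),
      (ν' (W.mkQ p)).toFun x = ⨆ q : W, (ν (p + (q : V))).toFun x)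
    (a : V) (x : ℝ) : (ν a).toFun x ≤ (ν' (W.mkQ a)).toFun x := by
  rw [hν' a x]
  have h := le_ciSup (q_bdd ν W a x) (0 : W)
  simpa using h

lemma q_exists {V : Type*} [AddCommGroup V] [Module ℝ V] (ν : V → DistFun)
    (W : Submodule ℝ V) (ν' : V ⧸ W → DistFun)
    (hν' : ∀ (p : V) (x : ℝ),
      (ν' (W.mkQ p)).toFun x = ⨆ q : W, (ν (p + (q : V))).toFun x)
    {a : V} {t c : ℝ} (hlt : c < (ν' (W.mkQ a)).toFun t) :
    ∃ w : W, c < (ν (a + (w:V))).toFun t := by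
  haveI : Nonempty W := ⟨0⟩
  by_contra hcon
  push_neg at hcon
  rw [hν' a t] at hlt
  exact absurd hlt (not_lt.mpr (ciSup_le hcon))

lemma q_sup_eq {V : Type*} [AddCommGroup V] [Module ℝ V] (ν : V → DistFun)
    (W : Submodule ℝ V) (ν' : V ⧸ W → DistFun)
    (hν' : ∀ (p : V) (x : ℝ),
      (ν' (W.mkQ p)).toFun x = ⨆ q : W, (ν (p + (q : V))).toFun x)
    (a : V) (y : ℝ) :
    (ν' (W.mkQ a)).toFun y
      = ⨆ i : Set.range (fun u : W => ν (a + (u:V))), (i : DistFun).toFun y := by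
  haveI : Nonempty W := ⟨0⟩
  haveI : Nonempty (Set.range (fun u : W => ν (a + (u:V)))) :=
    ⟨⟨_, Set.mem_range_self (0 : W)⟩⟩
  rw [hν' a y]
  apply le_antisymm
  · apply ciSup_le
    intro u
    exact le_ciSup (f := fun i : Set.range (fun u : W => ν (a + (u:V))) => (i : DistFun).toFun y)
      ⟨1, by rintro r ⟨i, rfl⟩; exact (i : DistFun).le_one' y⟩ ⟨_, Set.mem_range_self u⟩
  · apply ciSup_le
    rintro ⟨i, u, rfl⟩
    exact le_ciSup (q_bdd ν W a y) u

lemma q_N3 {V : Type*} [AddCommGroup V] [Module ℝ V] {ν : V → DistFun}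
    {τ τs : DistFun → DistFun → DistFun} (h : IsPNSpace ν τ τs) (hτ : SupCont τ)
    (W : Submodule ℝ V) (ν' : V ⧸ W → DistFun)
    (hν' : ∀ (p : V) (x : ℝ),
      (ν' (W.mkQ p)).toFun x = ⨆ q : W, (ν (p + (q : V))).toFun x) :
    ∀ (A B : V ⧸ W) (x : ℝ), (τ (ν' A) (ν' B)).toFun x ≤ (ν' (A + B)).toFun x := by
  intro A B x
  haveI : Nonempty W := ⟨0⟩
  obtain ⟨a, rfl⟩ := W.mkQ_surjective A
  obtain ⟨b, rfl⟩ := W.mkQ_surjective B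
  rw [← map_add]
  haveI hne_a : Nonempty (Set.range (fun u : W => ν (a + (u:V)))) :=
    ⟨⟨_, Set.mem_range_self (0 : W)⟩⟩
  haveI hne_b : Nonempty (Set.range (fun v : W => ν (b + (v:V)))) :=
    ⟨⟨_, Set.mem_range_self (0 : W)⟩⟩
  have hsup1 := hτ (fun i : Set.range (fun u : W => ν (a + (u:V))) => (i : DistFun))
    (ν' (W.mkQ a)) (ν' (W.mkQ b)) (q_sup_eq ν W ν' hν' a) x
  rw [hsup1]
  apply ciSup_le
  rintro ⟨i, u, rfl⟩
  show (τ (ν (a + (u:V))) (ν' (W.mkQ b))).toFun x ≤ (ν' (W.mkQ (a + b))).toFun x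
  rw [h.toIsPPNSpace.tri.comm]
  have hsup2 := hτ (fun j : Set.range (fun v : W => ν (b + (v:V))) => (j : DistFun))
    (ν' (W.mkQ b)) (ν (a + (u:V))) (q_sup_eq ν W ν' hν' b) x
  rw [hsup2]
  apply ciSup_le
  rintro ⟨j, v, rfl⟩
  show (τ (ν (b + (v:V))) (ν (a + (u:V)))).toFun x ≤ (ν' (W.mkQ (a + b))).toFun x
  rw [h.toIsPPNSpace.tri.comm]
  have h1 := h.N3 (a + (u:V)) (b + (v:V)) x
  refine le_trans h1 ?_
  rw [show a + (u:V) + (b + (v:V)) = a + b + ((u + v : W) : V) from by push_cast; abel]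
  rw [hν' (a+b) x]
  exact le_ciSup (q_bdd ν W (a+b) x) (u + v)

lemma q_N2 {V : Type*} [AddCommGroup V] [Module ℝ V] {ν : V → DistFun}
    {τ τs : DistFun → DistFun → DistFun} (h : IsPNSpace ν τ τs)
    (W : Submodule ℝ V) (ν' : V ⧸ W → DistFun)
    (hν' : ∀ (p : V) (x : ℝ),
      (ν' (W.mkQ p)).toFun x = ⨆ q : W, (ν (p + (q : V))).toFun x) :
    ∀ A : V ⧸ W, ν' (-A) = ν' A := by
  intro A
  obtain ⟨a, rfl⟩ := W.mkQ_surjective A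
  apply DF_ext
  intro x
  rw [← map_neg, hν', hν']
  haveI : Nonempty W := ⟨0⟩
  apply le_antisymm
  · apply ciSup_le
    intro u
    calc (ν (-a + (u:V))).toFun x = (ν (a + ((-u : W) : V))).toFun x := by
          rw [show -a + (u:V) = -(a + ((-u : W) : V)) from by push_cast; abel, h.N2]
      _ ≤ _ := le_ciSup (q_bdd ν W a x) (-u)
  · apply ciSup_le
    intro u
    calc (ν (a + (u:V))).toFun x = (ν (-a + ((-u : W) : V))).toFun x := by
          rw [show a + (u:V) = -(-a + ((-u : W) : V)) from by push_cast; abel, h.N2]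
      _ ≤ _ := le_ciSup (q_bdd ν W (-a) x) (-u)

lemma strongConv_tendsto {V : Type*} [AddCommGroup V] [Module ℝ V] {ν : V → DistFun}
    {τ τs : DistFun → DistFun → DistFun} (h : IsPNSpace ν τ τs)
    {p : ℕ → V} {x : V} (hx : StrongConv ν p x) :
    @Filter.Tendsto ℕ V p atTop (@nhds V (strongTop ν) x) := by
  have heq : strongTop ν = TopologicalSpace.generateFrom
      {S | ∃ (p : V) (t : ℝ), 0 < t ∧ S = {q | 1 - t < (ν (q - p)).toFun t}} := rfl
  rw [heq, TopologicalSpace.tendsto_nhds_generateFrom_iff]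
  rintro s ⟨p₀, t, htpos, rfl⟩ hxs
  rcases le_or_gt t 1 with ht1 | ht1
  · obtain ⟨η, hη0, hη1, hη⟩ :=
      exists_eta_one h.toIsPPNSpace.tri h.toIsPPNSpace.cont (ν (x - p₀)) htpos ht1 hxs
    obtain ⟨N, hN⟩ := hx η hη0
    apply Filter.mem_atTop_sets.mpr
    refine ⟨N, fun j hj => ?_⟩
    have h1 := hη _ (hN j hj)
    have h2 := h.N3 (p j - x) (x - p₀) t
    rw [show (p j - x) + (x - p₀) = p j - p₀ from by abel] at h2
    exact lt_of_lt_of_le h1 h2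
  · apply Filter.mem_atTop_sets.mpr
    exact ⟨0, fun j _ => lt_of_lt_of_le (by linarith) (DF_nonneg _ _)⟩

end PNAux
open PNAux in
theorem two_of_three_completeness {V : Type*} [AddCommGroup V] [Module ℝ V]
    (ν : V → DistFun) (τ τs : DistFun → DistFun → DistFun)
    (h : IsPNSpace ν τ τs) (hτ : SupCont τ) (hτs : SupCont τs)
    (W : Submodule ℝ V)
    (hW : StrongClosed ν (W : Set V))
    (ν' : V ⧸ W → DistFun)
    (hν' : ∀ (p : V) (x : ℝ),
      (ν' (W.mkQ p)).toFun x = ⨆ q : W, (ν (p + (q : V))).toFun x) :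
    (StrongComplete ν →
      StrongComplete (fun w : W => ν (w : V)) ∧ StrongComplete ν') ∧
    (StrongComplete ν → StrongComplete (fun w : W => ν (w : V)) → StrongComplete ν') ∧
    (StrongComplete ν → StrongComplete ν' → StrongComplete (fun w : W => ν (w : V))) ∧
    (StrongComplete (fun w : W => ν (w : V)) → StrongComplete ν' → StrongComplete ν) := by
  have htri := h.toIsPPNSpace.tri
  have hcont := h.toIsPPNSpace.cont
  have hN3' : ∀ a b : V, ∀ x : ℝ, (τ (ν a) (ν b)).toFun x ≤ (ν (a+b)).toFun x :=
    fun a b x => h.N3 a b x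
  -- Part 1a : V complete → W complete
  have hWc : StrongComplete ν → StrongComplete (fun w : W => ν (w : V)) := by
    intro hV p hp
    have hpV : StrongCauchy ν (fun k => (p k : V)) := by
      intro t ht
      obtain ⟨N, hN⟩ := hp t ht
      refine ⟨N, fun m n hm hn => ?_⟩
      have := hN m n hm hn
      simpa using this
    obtain ⟨x, hx⟩ := hV _ hpV
    have hxW : x ∈ W := by
      letI := strongTop ν
      have hcl : IsClosed (W : Set V) := hW
      exact hcl.mem_of_tendsto (strongConv_tendsto h hx)
        (Filter.Eventually.of_forall fun k => (p k).2)
    refine ⟨⟨x, hxW⟩, ?_⟩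
    intro t ht
    obtain ⟨N, hN⟩ := hx t ht
    refine ⟨N, fun n hn => ?_⟩
    have := hN n hn
    simpa using this
  -- Part 1b : V complete → quotient complete
  have hQc : StrongComplete ν → StrongComplete ν' := by
    intro hV pb hpb
    obtain ⟨η, hpos, hle1, hhalf, hchain⟩ := exists_chain htri hcont
    choose B hBspec using fun k : ℕ => hpb (η (k+1)) (hpos (k+1))
    obtain ⟨n, hmono, hge⟩ := exists_mono_ge B
    have hstep : ∀ k, 1 - η (k+1) < (ν' (pb (n (k+1)) - pb (n k))).toFun (η (k+1)) :=
      fun k => hBspec k (n k) (n (k+1)) (hge k)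
        (le_trans (hge k) (hmono.monotone (Nat.le_succ k)))
    choose y hy using fun k : ℕ => W.mkQ_surjective (pb (n k))
    have hstep2 : ∀ k (z : V), W.mkQ z = pb (n k) → ∃ z' : V,
        W.mkQ z' = pb (n (k+1)) ∧ 1 - η (k+1) < (ν (z' - z)).toFun (η (k+1)) := by
      intro k z hz
      have hmk : W.mkQ (y (k+1) - z) = pb (n (k+1)) - pb (n k) := by
        rw [map_sub, hy, hz]
      have hs := hstep k
      rw [← hmk] at hs
      obtain ⟨w, hw⟩ := q_exists ν W ν' hν' hs
      refine ⟨y (k+1) + (w : V), ?_, ?_⟩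
      · have h0 : W.mkQ (w : V) = 0 := by
          rw [Submodule.mkQ_apply, Submodule.Quotient.mk_eq_zero]
          exact w.2
        rw [map_add, hy, h0, add_zero]
      · rw [show y (k+1) + (w:V) - z = y (k+1) - z + (w:V) from by abel]
        exact hw
    let q : (k : ℕ) → {z : V // W.mkQ z = pb (n k)} := fun k =>
      Nat.rec (motive := fun k => {z : V // W.mkQ z = pb (n k)}) ⟨y 0, hy 0⟩
        (fun k ih => ⟨(hstep2 k ih.1 ih.2).choose, (hstep2 k ih.1 ih.2).choose_spec.1⟩) k
    have hqd : ∀ k, 1 - η (k+1) < (ν ((q (k+1)).1 - (q k).1)).toFun (η (k+1)) :=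
      fun k => (hstep2 k (q k).1 (q k).2).choose_spec.2
    have hν0 : ∀ t : ℝ, 0 < t → 1 - t < (ν 0).toFun t := by
      intro t ht
      rw [h.N1', eps0_pos ht]
      linarith
    have hqc : StrongCauchy ν (fun k => (q k).1) :=
      cauchy_of_chain hN3' h.N2 hν0 hpos hle1 hhalf hchain hqd
    obtain ⟨x, hxc⟩ := hV _ hqc
    have hsub : StrongConv ν' (fun k => pb (n k)) (W.mkQ x) := by
      intro t ht
      obtain ⟨N, hN⟩ := hxc t ht
      refine ⟨N, fun k hk => ?_⟩
      have heq : pb (n k) - W.mkQ x = W.mkQ ((q k).1 - x) := by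
        rw [map_sub, (q k).2]
      rw [heq]
      exact lt_of_lt_of_le (hN k hk) (q_ge ν W ν' hν' ((q k).1 - x) t)
    exact ⟨W.mkQ x, conv_of_subseq htri hcont (q_N3 h hτ W ν' hν') hpb hmono hsub⟩
  -- Part 4 : W complete ∧ quotient complete → V complete
  have hVc : StrongComplete (fun w : W => ν (w : V)) → StrongComplete ν' →
      StrongComplete ν := by
    intro hWcomp hQcomp p hp
    have hpq : StrongCauchy ν' (fun k => W.mkQ (p k)) := by
      intro t ht
      obtain ⟨N, hN⟩ := hp t ht
      refine ⟨N, fun m n hm hn => ?_⟩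
      rw [← map_sub]
      exact lt_of_lt_of_le (hN m n hm hn) (q_ge ν W ν' hν' _ t)
    obtain ⟨xb, hxb⟩ := hQcomp _ hpq
    obtain ⟨x₀, rfl⟩ := W.mkQ_surjective xb
    have hγpos : ∀ k : ℕ, (0:ℝ) < (1/2)^(k+1) := fun k => by positivity
    choose B hBspec using fun k : ℕ => hxb ((1/2)^(k+1)) (hγpos k)
    obtain ⟨n, hmono, hge⟩ := exists_mono_ge B
    have hw : ∀ k, ∃ w : W,
        1 - (1/2:ℝ)^(k+1) < (ν (p (n k) - x₀ + (w:V))).toFun ((1/2)^(k+1)) := by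
      intro k
      have hc := hBspec k (n k) (hge k)
      rw [← map_sub] at hc
      exact q_exists ν W ν' hν' hc
    choose w hwspec using hw
    -- bound transfer helper
    have hgk : ∀ (k K : ℕ) (e : ℝ), K ≤ k → (1/2:ℝ)^K < e →
        ∀ v : V, 1 - (1/2:ℝ)^(k+1) < (ν v).toFun ((1/2)^(k+1)) →
          1 - e < (ν v).toFun e := by
      intro k K e hKk hKe v hv
      refine DF_shrink ?_ hv
      calc (1/2:ℝ)^(k+1) ≤ (1/2)^K := by
            apply pow_le_pow_of_le_one (by norm_num) (by norm_num)
            omega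
        _ ≤ e := le_of_lt hKe
    have hwc : StrongCauchy (fun u : W => ν (u : V)) w := by
      intro t ht
      rcases le_or_gt t 1 with ht1 | ht1
      · obtain ⟨η₁, hη₁0, hη₁1, _, hη₁⟩ := exists_eta htri hcont ht ht1
        obtain ⟨η₂, hη₂0, hη₂1, hη₂le, hη₂⟩ := exists_eta htri hcont hη₁0 hη₁1
        obtain ⟨N₂, hN₂⟩ := hp η₂ hη₂0
        obtain ⟨K, hKs⟩ := exists_pow_lt_of_lt_one hη₂0 (by norm_num : (1/2:ℝ) < 1)
        refine ⟨max K N₂, ?_⟩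
        intro j k hj hk
        have hη₂η₁ : (1/2:ℝ)^K < η₁ := lt_of_lt_of_le hKs hη₂le
        have h1 : 1 - η₁ < (ν (p (n k) - x₀ + ((w k):V))).toFun η₁ :=
          hgk k K η₁ (le_trans (le_max_left _ _) hk) hη₂η₁ _ (hwspec k)
        have h2 : 1 - η₂ < (ν (-(p (n j) - x₀ + ((w j):V)))).toFun η₂ := by
          rw [h.N2]
          exact hgk j K η₂ (le_trans (le_max_left _ _) hj) hKs _ (hwspec j)
        have h3 : 1 - η₂ < (ν (p (n j) - p (n k))).toFun η₂ := by
          have hjN : N₂ ≤ n j :=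
            le_trans (le_trans (le_max_right _ _) hj) hmono.le_apply
          have hkN : N₂ ≤ n k :=
            le_trans (le_trans (le_max_right _ _) hk) hmono.le_apply
          exact hN₂ (n k) (n j) hkN hjN
        have h4 := hη₂ _ _ h2 h3
        have h5 := hN3' (-(p (n j) - x₀ + ((w j):V))) (p (n j) - p (n k)) η₁
        have h6 := lt_of_lt_of_le h4 h5
        have h7 := hη₁ _ _ h1 h6
        have h8 := hN3' (p (n k) - x₀ + ((w k):V))
          (-(p (n j) - x₀ + ((w j):V)) + (p (n j) - p (n k))) t
        rw [show (p (n k) - x₀ + ((w k):V)) +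
            (-(p (n j) - x₀ + ((w j):V)) + (p (n j) - p (n k))) =
            ((w k):V) - ((w j):V) from by abel] at h8
        have h9 := lt_of_lt_of_le h7 h8
        have hcoe : (((w k) - (w j) : W) : V) = ((w k):V) - ((w j):V) := by push_cast; abel
        show 1 - t < (ν (((w k) - (w j) : W) : V)).toFun t
        rw [hcoe]
        exact h9
      · exact ⟨0, fun m k _ _ => lt_of_lt_of_le (by linarith) (DF_nonneg _ _)⟩
    obtain ⟨wlim, hwlim⟩ := hWcomp w hwc
    have hsubconv : StrongConv ν (fun k => p (n k)) (x₀ - (wlim : V)) := by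
      intro t ht
      rcases le_or_gt t 1 with ht1 | ht1
      · obtain ⟨η₁, hη₁0, hη₁1, _, hη₁⟩ := exists_eta htri hcont ht ht1
        obtain ⟨K, hKs⟩ := exists_pow_lt_of_lt_one hη₁0 (by norm_num : (1/2:ℝ) < 1)
        obtain ⟨M, hM⟩ := hwlim η₁ hη₁0
        refine ⟨max K M, fun k hk => ?_⟩
        have h1 : 1 - η₁ < (ν (p (n k) - x₀ + ((w k):V))).toFun η₁ :=
          hgk k K η₁ (le_trans (le_max_left _ _) hk) hKs _ (hwspec k)
        have h2 : 1 - η₁ < (ν ((wlim:V) - ((w k):V))).toFun η₁ := by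
          have hm := hM k (le_trans (le_max_right _ _) hk)
          rw [show ((wlim:V) - ((w k):V)) = -((((w k) - wlim : W)):V) from by
            push_cast; abel, h.N2]
          exact hm
        have h3 := hη₁ _ _ h1 h2
        have h4 := hN3' (p (n k) - x₀ + ((w k):V)) ((wlim:V) - ((w k):V)) t
        rw [show (p (n k) - x₀ + ((w k):V)) + ((wlim:V) - ((w k):V)) =
            p (n k) - (x₀ - (wlim:V)) from by abel] at h4
        exact lt_of_lt_of_le h3 h4
      · exact ⟨0, fun k _ => lt_of_lt_of_le (by linarith) (DF_nonneg _ _)⟩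
    exact ⟨x₀ - (wlim : V), conv_of_subseq htri hcont hN3' hp hmono hsubconv⟩
  exact ⟨fun hV => ⟨hWc hV, hQc hV⟩, fun hV _ => hQc hV, fun hV _ => hWc hV, hVc⟩
end
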